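/- arXiv:2602.09054 — 5 statements merged into one kernel-verified Lean document; each statement's English description precedes it below -/
import Mathlib

section
/- Let n ≥ 1 and let W : ℝ → Matrix (Fin n) (Fin n) ℝ be continuous with W(t)_{ij} ≥ 0 for all i ≠ j and ∑_i W(t)_{ij} = 0 for all j and all t ≥ 0. Let p : ℝ → (Fin n → ℝ) be differentiable and solve p'(t) = W(t) · p(t) (matrix–vector product) for t ≥ 0, with p(0) a probability vector (all entries nonnegative, entries summing to 1). Then p(t) is a probability vector for every t ≥ 0. -/
open Matrix

/-- A time-dependent rate matrix generator preserves the probability simplex: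
if `W(t)` has nonnegative off-diagonal entries and vanishing column sums for
`t ≥ 0`, and `p` solves `p' = W p` with `p(0)` a probability vector, then
`p(t)` is a probability vector for all `t ≥ 0`. -/
theorem rate_matrix_preserves_simplex (n : ℕ) (hn : 1 ≤ n)
    (W : ℝ → Matrix (Fin n) (Fin n) ℝ)
    (hWcont : Continuous W)
    (hWoff : ∀ t ≥ (0 : ℝ), ∀ i j, i ≠ j → 0 ≤ W t i j)
    (hWcol : ∀ t ≥ (0 : ℝ), ∀ j, ∑ i, W t i j = 0)
    (p : ℝ → Fin n → ℝ)
    (hp : Differentiable ℝ p)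
    (hode : ∀ t ≥ (0 : ℝ), deriv p t = (W t).mulVec (p t))
    (hp0nonneg : ∀ i, 0 ≤ p 0 i)
    (hp0sum : ∑ i, p 0 i = 1) :
    ∀ t ≥ (0 : ℝ), (∀ i, 0 ≤ p t i) ∧ ∑ i, p t i = 1 := by
  -- derivative of each component
  have hpd : ∀ (i : Fin n) (t : ℝ), HasDerivAt (fun s => p s i) (deriv p t i) t := by
    intro i t
    have h := (ContinuousLinearMap.proj (R := ℝ) (φ := fun _ : Fin n => ℝ)
      i).hasFDerivAt.comp_hasDerivAt t (hp t).hasDerivAt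
    exact h
  have hpc : ∀ i : Fin n, Continuous fun s => p s i := fun i =>
    (continuous_apply i).comp hp.continuous
  have hWc : ∀ i j : Fin n, Continuous fun s => W s i j := fun i j =>
    (continuous_apply j).comp ((continuous_apply i).comp hWcont)
  -- sum conservation
  have hsum : ∀ t ≥ (0 : ℝ), ∑ i, p t i = 1 := by
    intro t ht
    have key : ∀ x ∈ Set.Icc (0:ℝ) t, (∑ i, p x i) = ∑ i, p 0 i := by
      apply constant_of_has_deriv_right_zero
      · exact (continuous_finset_sum _ fun i _ => hpc i).continuousOn
      · intro x hx
        have hx0 : (0:ℝ) ≤ x := hx.1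
        have hd : HasDerivAt (fun s => ∑ i, p s i) (∑ i, deriv p x i) x :=
          HasDerivAt.fun_sum fun i _ => hpd i x
        have h0 : (∑ i, deriv p x i) = 0 := by
          rw [hode x hx0]
          simp only [Matrix.mulVec, dotProduct]
          rw [Finset.sum_comm]
          refine Finset.sum_eq_zero fun j _ => ?_
          rw [← Finset.sum_mul, hWcol x hx0 j, zero_mul]
        exact (h0 ▸ hd).hasDerivWithinAt
    have := key t ⟨ht, le_refl t⟩
    rw [this, hp0sum]
  intro t ht
  refine ⟨fun i => ?_, hsum t ht⟩
  -- bound row sums of W on [0, t]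
  set g : ℝ → ℝ := fun s => ∑ k, |∑ j, W s k j| with hg
  have hgc : Continuous g :=
    continuous_finset_sum _ fun k _ => (continuous_finset_sum _ fun j _ => hWc k j).abs
  obtain ⟨s₀, _, hs₀⟩ : ∃ s₀ ∈ Set.Icc (0:ℝ) t, ∀ s ∈ Set.Icc (0:ℝ) t, g s ≤ g s₀ := by
    obtain ⟨s₀, hs₀mem, hmax⟩ := isCompact_Icc.exists_isMaxOn
      ⟨0, Set.left_mem_Icc.mpr ht⟩ hgc.continuousOn
    exact ⟨s₀, hs₀mem, fun s hs => hmax hs⟩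
  set C : ℝ := g s₀ + 1 with hC
  have hrow : ∀ s ∈ Set.Icc (0:ℝ) t, ∀ k, ∑ j, W s k j ≤ C - 1 := by
    intro s hs k
    calc ∑ j, W s k j ≤ |∑ j, W s k j| := le_abs_self _
      _ ≤ g s := by
          rw [hg]
          exact Finset.single_le_sum (f := fun m => |∑ j, W s m j|)
            (fun m _ => abs_nonneg _) (Finset.mem_univ k)
      _ ≤ g s₀ := hs₀ s hs
      _ = C - 1 := by ring
  -- the ε-shifted positivity claim
  have hpos : ∀ ε > (0:ℝ), ∀ s ∈ Set.Icc (0:ℝ) t, ∀ k, 0 < p s k + ε * Real.exp (C * s) := by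
    intro ε hε
    set q : Fin n → ℝ → ℝ := fun k s => p s k + ε * Real.exp (C * s) with hqdef
    have hqc : ∀ k, Continuous (q k) := fun k =>
      (hpc k).add (continuous_const.mul ((continuous_const.mul continuous_id).rexp))
    by_contra hcon
    push_neg at hcon
    set S : Set ℝ := Set.Icc 0 t ∩ (⋃ k, {s | q k s ≤ 0}) with hS
    have hSne : S.Nonempty := by
      obtain ⟨s, hs, k, hk⟩ := hcon
      exact ⟨s, hs, Set.mem_iUnion.mpr ⟨k, hk⟩⟩
    have hScl : IsClosed S :=
      isClosed_Icc.inter (isClosed_iUnion_of_finite fun k =>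
        isClosed_le (hqc k) continuous_const)
    have hSbdd : BddBelow S := ⟨0, fun s hs => hs.1.1⟩
    set τ : ℝ := sInf S with hτ
    have hτS : τ ∈ S := hScl.csInf_mem hSne hSbdd
    obtain ⟨hτIcc, hτU⟩ := hτS
    obtain ⟨i, hi⟩ := Set.mem_iUnion.mp hτU
    have hq0 : ∀ k, 0 < q k 0 := fun k => by
      simp only [hqdef, mul_zero, Real.exp_zero, mul_one]
      exact add_pos_of_nonneg_of_pos (hp0nonneg k) hε
    have hτpos : 0 < τ := by
      rcases lt_or_eq_of_le hτIcc.1 with h | h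
      · exact h
      · exact absurd hi (by rw [← h]; exact not_le.mpr (hq0 i))
    -- before τ, everything is positive
    have hbefore : ∀ s ∈ Set.Ico (0:ℝ) τ, ∀ k, 0 < q k s := by
      intro s hs k
      by_contra hle
      push_neg at hle
      have hsS : s ∈ S := ⟨⟨hs.1, hs.2.le.trans hτIcc.2⟩, Set.mem_iUnion.mpr ⟨k, hle⟩⟩
      exact absurd (csInf_le hSbdd hsS) (not_le.mpr hs.2)
    -- at τ, all components nonnegative
    have hτnonneg : ∀ k, 0 ≤ q k τ := by
      intro k
      have htend : Filter.Tendsto (q k) (nhdsWithin τ (Set.Iio τ)) (nhds (q k τ)) :=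
        ((hqc k).continuousAt).continuousWithinAt.tendsto
      refine ge_of_tendsto htend ?_
      filter_upwards [Ioo_mem_nhdsLT hτpos] with s hs
      exact (hbefore s ⟨hs.1.le, hs.2⟩ k).le
    have hqiτ : q i τ = 0 := le_antisymm hi (hτnonneg i)
    -- derivative of q i at τ is positive
    set d : ℝ := deriv p τ i + ε * (Real.exp (C * τ) * C) with hd
    have hqd : HasDerivAt (q i) d τ := by
      have h1 : HasDerivAt (fun s => Real.exp (C * s)) (Real.exp (C * τ) * C) τ := by
        simpa using ((hasDerivAt_id τ).const_mul C).exp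
      exact (hpd i τ).add (h1.const_mul ε)
    have hdpos : 0 < d := by
      have hτ0 : (0:ℝ) ≤ τ := hτIcc.1
      have hode' : deriv p τ i = ∑ j, W τ i j * p τ j := by
        rw [hode τ hτ0]; rfl
      have hsplit : ∀ j, p τ j = q j τ - ε * Real.exp (C * τ) := fun j => by
        simp [hqdef]
      have h2 : deriv p τ i =
          (∑ j, W τ i j * q j τ) - ε * Real.exp (C * τ) * (∑ j, W τ i j) := by
        rw [hode']
        have heach : ∀ j, W τ i j * p τ j =
            W τ i j * q j τ - ε * Real.exp (C * τ) * W τ i j := by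
          intro j; rw [hsplit j]; ring
        rw [Finset.sum_congr rfl fun j _ => heach j, Finset.sum_sub_distrib,
          ← Finset.mul_sum]
      have h3 : 0 ≤ ∑ j, W τ i j * q j τ := by
        refine Finset.sum_nonneg fun j _ => ?_
        rcases eq_or_ne j i with rfl | hne
        · rw [hqiτ, mul_zero]
        · exact mul_nonneg (hWoff τ hτ0 i j (Ne.symm hne)) (hτnonneg j)
      have h4 : ∑ j, W τ i j ≤ C - 1 := hrow τ hτIcc i
      have hexp : 0 < Real.exp (C * τ) := Real.exp_pos _
      rw [hd, h2]
      have : ε * Real.exp (C * τ) * (∑ j, W τ i j) ≤ ε * Real.exp (C * τ) * (C - 1) :=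
        mul_le_mul_of_nonneg_left h4 (by positivity)
      nlinarith
    -- but q i is positive before τ and zero at τ, so derivative ≤ 0: contradiction
    have hslope : Filter.Tendsto (slope (q i) τ) (nhdsWithin τ {τ}ᶜ) (nhds d) :=
      hasDerivAt_iff_tendsto_slope.mp hqd
    have hslope' : Filter.Tendsto (slope (q i) τ) (nhdsWithin τ (Set.Iio τ)) (nhds d) :=
      hslope.mono_left (nhdsWithin_mono τ fun s hs => ne_of_lt hs)
    have h5 : ∀ᶠ s in nhdsWithin τ (Set.Iio τ), 0 < slope (q i) τ s :=
      hslope'.eventually (eventually_gt_nhds hdpos)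
    have h6 : ∀ᶠ s in nhdsWithin τ (Set.Iio τ), slope (q i) τ s < 0 := by
      filter_upwards [Ioo_mem_nhdsLT hτpos, self_mem_nhdsWithin] with s hs hs'
      have hqs : 0 < q i s := hbefore s ⟨hs.1.le, hs.2⟩ i
      rw [slope_def_field, hqiτ, sub_zero]
      exact div_neg_of_pos_of_neg hqs (sub_neg.mpr hs')
    obtain ⟨s, hs5, hs6⟩ := (h5.and h6).exists
    exact absurd hs5 (not_lt.mpr hs6.le)
  -- let ε → 0
  by_contra hneg
  push_neg at hneg
  set ε : ℝ := -p t i / (2 * Real.exp (C * t)) with hε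
  have hεpos : 0 < ε := div_pos (neg_pos.mpr hneg) (by positivity)
  have := hpos ε hεpos t ⟨ht, le_refl t⟩ i
  rw [hε] at this
  have hexp : 0 < Real.exp (C * t) := Real.exp_pos _
  have : 0 < p t i + -p t i / (2 * Real.exp (C * t)) * Real.exp (C * t) := this
  rw [div_mul_eq_mul_div, mul_comm (2:ℝ), ← div_div, mul_div_assoc,
    div_self hexp.ne', mul_one] at this
  linarith
end

section
/- Let n ≥ 1, let W : Matrix (Fin n) (Fin n) ℝ satisfy W_{ij} ≥ 0 for all i ≠ j and ∑_i W_{ij} = 0 for all j. Let π ∈ Fin n → ℝ have π_i > 0 for all i and satisfy W · π = 0 (matrix–vector product), and let p ∈ Fin n → ℝ be a probability vector with p_i > 0 for all i. Then ∑_i (W · p)_i · log(p_i / π_i) ≤ 0. -/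
open Matrix

/-- Dissipation inequality: for a rate matrix `W` (nonnegative off-diagonal
entries, vanishing column sums) with positive stationary vector `π`, and any
positive probability vector `p`, the instantaneous KL-divergence production
`∑ i (W p)_i log(p_i / π_i)` is nonpositive. -/
theorem kl_dissipation_inequality (n : ℕ) (hn : 1 ≤ n)
    (W : Matrix (Fin n) (Fin n) ℝ)
    (hWoff : ∀ i j, i ≠ j → 0 ≤ W i j)
    (hWcol : ∀ j, ∑ i, W i j = 0)
    (π : Fin n → ℝ)
    (hπpos : ∀ i, 0 < π i)
    (hπstat : W.mulVec π = 0)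
    (p : Fin n → ℝ)
    (hppos : ∀ i, 0 < p i)
    (hpsum : ∑ i, p i = 1) :
    ∑ i, (W.mulVec p) i * Real.log (p i / π i) ≤ 0 := by
  set r : Fin n → ℝ := fun i => p i / π i with hr
  have hrpos : ∀ i, 0 < r i := fun i => div_pos (hppos i) (hπpos i)
  have key : ∀ i j, W i j * p j * (Real.log (r i) - Real.log (r j))
      ≤ W i j * π j * r i - W i j * p j := by
    intro i j
    by_cases h : i = j
    · subst h
      have hπ : W i i * π i * r i = W i i * p i := by
        have := (hπpos i).ne'
        simp only [hr]; field_simp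
      simp [hπ]
    · have hW := hWoff i j h
      have hlog : Real.log (r i) - Real.log (r j) ≤ r i / r j - 1 := by
        rw [← Real.log_div (ne_of_gt (hrpos i)) (ne_of_gt (hrpos j))]
        exact Real.log_le_sub_one_of_pos (div_pos (hrpos i) (hrpos j))
      have h1 : W i j * p j * (Real.log (r i) - Real.log (r j))
          ≤ W i j * p j * (r i / r j - 1) :=
        mul_le_mul_of_nonneg_left hlog (mul_nonneg hW (hppos j).le)
      refine h1.trans_eq ?_
      have hpj := (hppos j).ne'
      have hπi := (hπpos i).ne'
      have hπj := (hπpos j).ne'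
      simp only [hr]
      field_simp
  have e1 : ∑ i, (W.mulVec p) i * Real.log (p i / π i)
      = ∑ i, ∑ j, W i j * p j * Real.log (r i) := by
    simp only [Matrix.mulVec, dotProduct, Finset.sum_mul, hr]
  have e2 : ∑ i, ∑ j, W i j * p j * Real.log (r j) = 0 := by
    rw [Finset.sum_comm]
    refine Finset.sum_eq_zero fun j _ => ?_
    have : ∑ i, W i j * p j * Real.log (r j)
        = (∑ i, W i j) * (p j * Real.log (r j)) := by
      rw [Finset.sum_mul]
      exact Finset.sum_congr rfl fun _ _ => by ring
    rw [this, hWcol, zero_mul]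
  have e3 : ∑ i, ∑ j, (W i j * π j * r i - W i j * p j) = 0 := by
    have h1 : ∑ i, ∑ j, W i j * π j * r i = 0 := by
      refine Finset.sum_eq_zero fun i _ => ?_
      have : ∑ j, W i j * π j * r i = (W.mulVec π) i * r i := by
        simp [Matrix.mulVec, dotProduct, Finset.sum_mul]
      rw [this, hπstat]; simp
    have h2 : ∑ i, ∑ j, W i j * p j = 0 := by
      rw [Finset.sum_comm]
      refine Finset.sum_eq_zero fun j _ => ?_
      rw [← Finset.sum_mul, hWcol, zero_mul]
    simp only [Finset.sum_sub_distrib, h1, h2, sub_zero]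
  calc ∑ i, (W.mulVec p) i * Real.log (p i / π i)
      = ∑ i, ∑ j, W i j * p j * (Real.log (r i) - Real.log (r j)) := by
        simp only [mul_sub, Finset.sum_sub_distrib, e2, sub_zero, e1]
    _ ≤ ∑ i, ∑ j, (W i j * π j * r i - W i j * p j) :=
        Finset.sum_le_sum fun i _ => Finset.sum_le_sum fun j _ => key i j
    _ = 0 := e3
end

section
/- Let n ≥ 1 and let W : ℝ → Matrix (Fin n) (Fin n) ℝ be continuous with W(t)_{ij} ≥ 0 for all i ≠ j and ∑_i W(t)_{ij} = 0 for all j and all t ≥ 0. Let π ∈ Fin n → ℝ be a probability vector with π_i > 0 for all i and W(t) · π = 0 for all t ≥ 0. Let p : ℝ → (Fin n → ℝ) be differentiable, solve p'(t) = W(t) · p(t) for t ≥ 0, with p(0) a probability vector, and assume p_i(t) > 0 for all i and all t ≥ 0. Then the Kullback–Leibler divergence t ↦ D_KL(p(t)‖π) := ∑_i p_i(t) log(p_i(t)/π_i) is monotone non-increasing on [0, ∞). -/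
open Matrix

private lemma kl_key (n : ℕ) (A : Matrix (Fin n) (Fin n) ℝ)
    (hoff : ∀ i j, i ≠ j → 0 ≤ A i j) (hcol : ∀ j, ∑ i, A i j = 0)
    (π q : Fin n → ℝ) (hπ : ∀ i, 0 < π i) (hstat : A.mulVec π = 0)
    (hq : ∀ i, 0 < q i) :
    ∑ i, A.mulVec q i * Real.log (q i / π i) ≤ 0 := by
  set r : Fin n → ℝ := fun i => q i / π i with hr
  have hrpos : ∀ i, 0 < r i := fun i => div_pos (hq i) (hπ i)
  have hπr : ∀ i, π i * r i = q i := fun i => by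
    rw [hr, mul_comm]; exact div_mul_cancel₀ (q i) (hπ i).ne'
  have hS : ∑ i, A.mulVec q i * Real.log (q i / π i)
      = ∑ i, ∑ j, A i j * q j * Real.log (r i) := by
    simp only [mulVec, dotProduct, Finset.sum_mul, hr]
  rw [hS]
  have h0 : ∑ i, ∑ j, A i j * q j * Real.log (r j) = 0 := by
    rw [Finset.sum_comm]
    refine Finset.sum_eq_zero fun j _ => ?_
    have h : ∑ i, A i j * q j * Real.log (r j)
        = (∑ i, A i j) * (q j * Real.log (r j)) := by
      rw [Finset.sum_mul]; simp [mul_assoc]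
    rw [h, hcol, zero_mul]
  have hle : ∑ i, ∑ j, (A i j * q j * Real.log (r i) - A i j * q j * Real.log (r j))
      ≤ ∑ i, ∑ j, A i j * (π j * r i - q j) := by
    refine Finset.sum_le_sum fun i _ => Finset.sum_le_sum fun j _ => ?_
    by_cases hij : i = j
    · subst hij; rw [hπr]; simp
    · have hA := hoff i j hij
      have hlog : Real.log (r i) - Real.log (r j) = Real.log (r i / r j) :=
        (Real.log_div (hrpos i).ne' (hrpos j).ne').symm
      have h1 : r j * Real.log (r i / r j) ≤ r i - r j := by
        have h := Real.log_le_sub_one_of_pos (div_pos (hrpos i) (hrpos j))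
        have h2 := mul_le_mul_of_nonneg_left h (hrpos j).le
        calc r j * Real.log (r i / r j) ≤ r j * (r i / r j - 1) := h2
          _ = r i - r j := by
            rw [mul_sub, mul_one, mul_div_assoc', mul_div_cancel_left₀ _ (hrpos j).ne']
      have h3 : q j * (Real.log (r i) - Real.log (r j)) ≤ π j * r i - q j := by
        rw [hlog, ← hπr j]
        calc π j * r j * Real.log (r i / r j)
            = π j * (r j * Real.log (r i / r j)) := by ring
          _ ≤ π j * (r i - r j) := mul_le_mul_of_nonneg_left h1 (hπ j).le
          _ = π j * r i - π j * r j := by ring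
      calc A i j * q j * Real.log (r i) - A i j * q j * Real.log (r j)
          = A i j * (q j * (Real.log (r i) - Real.log (r j))) := by ring
        _ ≤ A i j * (π j * r i - q j) := mul_le_mul_of_nonneg_left h3 hA
  have hT : ∑ i, ∑ j, A i j * (π j * r i - q j) = 0 := by
    have h1 : ∑ i, ∑ j, A i j * (π j * r i) = 0 := by
      refine Finset.sum_eq_zero fun i _ => ?_
      have h : ∑ j, A i j * (π j * r i) = (∑ j, A i j * π j) * r i := by
        rw [Finset.sum_mul]; simp [mul_assoc]
      rw [h]
      have h' : (∑ j, A i j * π j) = A.mulVec π i := rfl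
      rw [h', hstat]; simp
    have h2 : ∑ i, ∑ j, A i j * q j = 0 := by
      rw [Finset.sum_comm]
      refine Finset.sum_eq_zero fun j _ => ?_
      rw [← Finset.sum_mul, hcol, zero_mul]
    simp only [mul_sub]
    simp [Finset.sum_sub_distrib, h1, h2]
  have hsplit : ∑ i, ∑ j, (A i j * q j * Real.log (r i) - A i j * q j * Real.log (r j))
      = (∑ i, ∑ j, A i j * q j * Real.log (r i))
        - (∑ i, ∑ j, A i j * q j * Real.log (r j)) := by
    simp [Finset.sum_sub_distrib]
  linarith

/-- Proposition 1: classical divisibility implies monotone non-increasing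
Kullback–Leibler relaxation. -/
theorem kl_monotone_of_rate_matrix (n : ℕ) (hn : 1 ≤ n)
    (W : ℝ → Matrix (Fin n) (Fin n) ℝ)
    (hWcont : Continuous W)
    (hWoff : ∀ t ≥ (0 : ℝ), ∀ i j, i ≠ j → 0 ≤ W t i j)
    (hWcol : ∀ t ≥ (0 : ℝ), ∀ j, ∑ i, W t i j = 0)
    (π : Fin n → ℝ)
    (hπpos : ∀ i, 0 < π i)
    (hπsum : ∑ i, π i = 1)
    (hπstat : ∀ t ≥ (0 : ℝ), (W t).mulVec π = 0)
    (p : ℝ → Fin n → ℝ)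
    (hp : Differentiable ℝ p)
    (hode : ∀ t ≥ (0 : ℝ), deriv p t = (W t).mulVec (p t))
    (hp0nonneg : ∀ i, 0 ≤ p 0 i)
    (hp0sum : ∑ i, p 0 i = 1)
    (hppos : ∀ t ≥ (0 : ℝ), ∀ i, 0 < p t i) :
    AntitoneOn (fun t => ∑ i, p t i * Real.log (p t i / π i)) (Set.Ici (0 : ℝ)) := by
  set f : ℝ → ℝ := fun t => ∑ i, p t i * Real.log (p t i / π i) with hf
  have hpc : ∀ i, Continuous fun s => p s i := fun i =>
    (continuous_apply i).comp hp.continuous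
  -- derivative at each t ≥ 0
  have hD : ∀ t ≥ (0 : ℝ), HasDerivAt f
      (∑ i, ((W t).mulVec (p t) i * Real.log (p t i / π i)
        + p t i * (((W t).mulVec (p t) i / π i) / (p t i / π i)))) t := by
    intro t ht
    have hv : HasDerivAt p ((W t).mulVec (p t)) t := by
      have := (hp t).hasDerivAt
      rwa [hode t ht] at this
    have h1 : ∀ i, HasDerivAt (fun s => p s i) ((W t).mulVec (p t) i) t :=
      fun i => hasDerivAt_pi.1 hv i
    refine HasDerivAt.fun_sum fun i _ => ?_
    have h2 : HasDerivAt (fun s => p s i / π i) ((W t).mulVec (p t) i / π i) t :=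
      (h1 i).div_const _
    have hne : p t i / π i ≠ 0 := (div_pos (hppos t ht i) (hπpos i)).ne'
    exact (h1 i).mul (h2.log hne)
  have hD' : ∀ t ≥ (0 : ℝ), HasDerivAt f
      (∑ i, ((W t).mulVec (p t) i * Real.log (p t i / π i) + (W t).mulVec (p t) i)) t := by
    intro t ht
    have h := hD t ht
    have : ∀ i, p t i * (((W t).mulVec (p t) i / π i) / (p t i / π i))
        = (W t).mulVec (p t) i := by
      intro i
      rw [div_div_div_cancel_right₀]
      · exact mul_div_cancel₀ _ (hppos t ht i).ne'
      · exact (hπpos i).ne'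
    simpa [this] using h
  have hDle : ∀ t ≥ (0 : ℝ),
      (∑ i, ((W t).mulVec (p t) i * Real.log (p t i / π i) + (W t).mulVec (p t) i)) ≤ 0 := by
    intro t ht
    have hsum0 : ∑ i, (W t).mulVec (p t) i = 0 := by
      simp only [mulVec, dotProduct]
      rw [Finset.sum_comm]
      refine Finset.sum_eq_zero fun j _ => ?_
      rw [← Finset.sum_mul, hWcol t ht, zero_mul]
    have hkey := kl_key n (W t) (hWoff t ht) (hWcol t ht) π (p t) hπpos (hπstat t ht)
      (hppos t ht)
    rw [Finset.sum_add_distrib, hsum0, add_zero]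
    exact hkey
  refine antitoneOn_of_deriv_nonpos (convex_Ici 0) ?_ ?_ ?_
  · intro t ht
    refine ContinuousAt.continuousWithinAt ?_
    have : ∀ i, ContinuousAt (fun s => p s i * Real.log (p s i / π i)) t := by
      intro i
      refine ((hpc i).continuousAt).mul (Real.continuousAt_log ?_ |>.comp
        (((hpc i).div_const (π i)).continuousAt))
      exact (div_pos (hppos t ht i) (hπpos i)).ne'
    exact tendsto_finset_sum _ fun i _ => this i
  · rw [interior_Ici]
    intro t ht
    exact ((hD t (le_of_lt ht)).differentiableAt).differentiableWithinAt
  · rw [interior_Ici]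
    intro t ht
    rw [(hD' t (le_of_lt ht)).deriv]
    exact hDle t (le_of_lt ht)
end

section
/- Let n ≥ 1 and let W : ℝ → Matrix (Fin n) (Fin n) ℝ be continuous with W(t)_{ij} ≥ 0 for all i ≠ j, ∑_i W(t)_{ij} = 0 for all j (vanishing column sums), and ∑_j W(t)_{ij} = 0 for all i (vanishing row sums) for all t ≥ 0. Let p : ℝ → (Fin n → ℝ) be differentiable, solve p'(t) = W(t) · p(t) for t ≥ 0, with p(0) a probability vector, and assume p_i(t) > 0 for all i and t ≥ 0. Then the Shannon entropy S(t) := −∑_i p_i(t) log p_i(t) is monotone non-decreasing on [0, ∞). -/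
open Matrix

lemma key_dissipation (n : ℕ) (A : Matrix (Fin n) (Fin n) ℝ) (q : Fin n → ℝ)
    (hoff : ∀ i j, i ≠ j → 0 ≤ A i j) (hcol : ∀ j, ∑ i, A i j = 0)
    (hrow : ∀ i, ∑ j, A i j = 0) (hq : ∀ i, 0 < q i) :
    ∑ i, (A.mulVec q i * Real.log (q i) + A.mulVec q i) ≤ 0 := by
  have hmv : ∀ i, A.mulVec q i = ∑ j, A i j * q j := fun i => rfl
  have hsum2 : ∑ i, A.mulVec q i = 0 := by
    simp only [hmv]
    rw [Finset.sum_comm]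
    simp only [← Finset.sum_mul, hcol, zero_mul, Finset.sum_const_zero]
  have hdiag : ∑ i, ∑ j, A i j * q j * Real.log (q j) = 0 := by
    rw [Finset.sum_comm]
    have : ∀ j, ∑ i, A i j * q j * Real.log (q j) = 0 := by
      intro j
      simp only [← Finset.sum_mul, ← Finset.sum_mul, hcol, zero_mul]
    simp [this]
  have h1 : ∑ i, A.mulVec q i * Real.log (q i)
      = ∑ i, ∑ j, A i j * q j * (Real.log (q i) - Real.log (q j)) := by
    simp only [hmv, Finset.sum_mul, mul_sub, Finset.sum_sub_distrib]
    rw [hdiag, sub_zero]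
  have h2 : ∀ i j, A i j * q j * (Real.log (q i) - Real.log (q j))
      ≤ A i j * (q i - q j) := by
    intro i j
    rcases eq_or_ne i j with rfl | hij
    · simp
    · have hA := hoff i j hij
      have hlog : Real.log (q i) - Real.log (q j) ≤ q i / q j - 1 := by
        rw [← Real.log_div (hq i).ne' (hq j).ne']
        exact Real.log_le_sub_one_of_pos (div_pos (hq i) (hq j))
      calc A i j * q j * (Real.log (q i) - Real.log (q j))
          ≤ A i j * q j * (q i / q j - 1) := by
            apply mul_le_mul_of_nonneg_left hlog
            exact mul_nonneg hA (hq j).le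
        _ = A i j * (q i - q j) := by
            have hj : q j ≠ 0 := (hq j).ne'
            field_simp
  have h3 : ∑ i, ∑ j, A i j * (q i - q j) = 0 := by
    simp only [mul_sub, Finset.sum_sub_distrib]
    have ha : ∑ i, ∑ j, A i j * q i = 0 := by
      simp only [← Finset.sum_mul, hrow, zero_mul, Finset.sum_const_zero]
    have hb : ∑ i, ∑ j, A i j * q j = 0 := by
      rw [Finset.sum_comm]
      simp only [← Finset.sum_mul, hcol, zero_mul, Finset.sum_const_zero]
    rw [ha, hb, sub_zero]
  have h4 : ∑ i, A.mulVec q i * Real.log (q i) ≤ 0 := by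
    rw [h1, ← h3]
    exact Finset.sum_le_sum fun i _ => Finset.sum_le_sum fun j _ => h2 i j
  rw [Finset.sum_add_distrib, hsum2, add_zero]
  exact h4

/-- For a doubly balanced time-dependent rate matrix (nonnegative off-diagonal
entries, vanishing column and row sums), the Shannon entropy of the solution
of `p' = W p` is monotone non-decreasing on `[0, ∞)`. -/
theorem entropy_monotone_of_doubly_balanced (n : ℕ) (hn : 1 ≤ n)
    (W : ℝ → Matrix (Fin n) (Fin n) ℝ)
    (hWcont : Continuous W)
    (hWoff : ∀ t ≥ (0 : ℝ), ∀ i j, i ≠ j → 0 ≤ W t i j)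
    (hWcol : ∀ t ≥ (0 : ℝ), ∀ j, ∑ i, W t i j = 0)
    (hWrow : ∀ t ≥ (0 : ℝ), ∀ i, ∑ j, W t i j = 0)
    (p : ℝ → Fin n → ℝ)
    (hp : Differentiable ℝ p)
    (hode : ∀ t ≥ (0 : ℝ), deriv p t = (W t).mulVec (p t))
    (hp0nonneg : ∀ i, 0 ≤ p 0 i)
    (hp0sum : ∑ i, p 0 i = 1)
    (hppos : ∀ t ≥ (0 : ℝ), ∀ i, 0 < p t i) :
    MonotoneOn (fun t => -∑ i, p t i * Real.log (p t i)) (Set.Ici (0 : ℝ)) := by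
  set S : ℝ → ℝ := fun t => -∑ i, p t i * Real.log (p t i) with hS
  have hcomp : ∀ t, ∀ i : Fin n, HasDerivAt (fun s => p s i) (deriv p t i) t :=
    fun t i => hasDerivAt_pi.mp (hp t).hasDerivAt i
  have hSderiv : ∀ t ≥ (0 : ℝ), HasDerivAt S
      (-∑ i, (deriv p t i * Real.log (p t i) + deriv p t i)) t := by
    intro t ht
    apply HasDerivAt.neg
    apply HasDerivAt.fun_sum
    intro i _
    have hne : p t i ≠ 0 := (hppos t ht i).ne'
    have hlog := (hcomp t i).log hne
    have := (hcomp t i).fun_mul hlog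
    rw [mul_div_cancel₀ _ hne] at this
    exact this
  have hinterior : interior (Set.Ici (0:ℝ)) = Set.Ioi 0 := interior_Ici
  apply monotoneOn_of_deriv_nonneg (convex_Ici 0)
  · intro t ht
    exact ((hSderiv t ht).continuousAt).continuousWithinAt
  · rw [hinterior]
    intro t ht
    exact ((hSderiv t (le_of_lt ht)).differentiableAt).differentiableWithinAt
  · rw [hinterior]
    intro t ht
    have ht' : (0:ℝ) ≤ t := le_of_lt ht
    rw [(hSderiv t ht').deriv]
    have := key_dissipation n (W t) (p t) (hWoff t ht') (hWcol t ht') (hWrow t ht') (hppos t ht')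
    rw [hode t ht']
    simpa using neg_nonneg.mpr this
end

section
/- Let λ > 0 and ω > 0 and define b : ℝ → ℝ by b(t) = (1/4) e^{−λ t} sin²(ω t). Then b is differentiable, max(b'(·), 0) is integrable on [0, ∞), and the backflow functional is strictly positive: N_b := ∫₀^∞ max(b'(t), 0) dt > 0. In particular, b is not monotone non-increasing on [0, ∞). -/
/-- Backflow functional: `N_f = ∫₀^∞ max(f'(t), 0) dt`. -/
noncomputable def backflow (f : ℝ → ℝ) : ℝ :=
  ∫ t in Set.Ioi (0 : ℝ), max (deriv f t) 0

/-- The damped-oscillation intrinsic component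
`b(t) = (1/4) e^{−λt} sin²(ωt)` is differentiable, its positive derivative
part is integrable on `[0, ∞)`, and its backflow functional is strictly
positive; in particular `b` is not monotone non-increasing on `[0, ∞)`. -/
theorem damped_oscillation_positive_backflow (lam ω : ℝ)
    (hlam : 0 < lam) (hω : 0 < ω)
    (b : ℝ → ℝ)
    (hb : ∀ t, b t = (1 / 4) * Real.exp (-lam * t) * Real.sin (ω * t) ^ 2) :
    Differentiable ℝ b ∧
    MeasureTheory.IntegrableOn (fun t => max (deriv b t) 0) (Set.Ioi (0 : ℝ)) ∧
    0 < backflow b ∧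
    ¬ AntitoneOn b (Set.Ici (0 : ℝ)) := by
  have hbfun : b = fun t => (1/4) * (Real.exp (-lam*t) * Real.sin (ω*t)^2) := by
    funext t; rw [hb]; ring
  set D : ℝ → ℝ := fun t =>
    (1/4) * Real.exp (-lam*t) * (Real.sin (ω*t) *
      (2*ω*Real.cos (ω*t) - lam * Real.sin (ω*t))) with hD
  have key : ∀ t, HasDerivAt b (D t) t := by
    intro t
    have h1 : HasDerivAt (fun t : ℝ => -lam * t) (-lam) t := by
      simpa using (hasDerivAt_id t).const_mul (-lam)
    have hexp := (Real.hasDerivAt_exp (-lam*t)).comp t h1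
    have h2 : HasDerivAt (fun t : ℝ => ω * t) ω t := by
      simpa using (hasDerivAt_id t).const_mul ω
    have hsin := (Real.hasDerivAt_sin (ω*t)).comp t h2
    have hsq := hsin.pow 2
    have hmul := (hexp.mul hsq).const_mul (1/4 : ℝ)
    rw [hbfun]
    refine hmul.congr_deriv ?_
    simp [hD]
    ring
  have hderiv : ∀ t, deriv b t = D t := fun t => (key t).deriv
  have hdiff : Differentiable ℝ b := fun t => (key t).differentiableAt
  have hcontD : Continuous D := by
    apply Continuous.mul
    · exact (continuous_const.mul ((Real.continuous_exp.comp (continuous_const.mul continuous_id))))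
    · exact (Real.continuous_sin.comp (continuous_const.mul continuous_id)).mul
        (((continuous_const.mul (Real.continuous_cos.comp (continuous_const.mul continuous_id)))).sub
          (continuous_const.mul (Real.continuous_sin.comp (continuous_const.mul continuous_id))))
  have hcont : Continuous (deriv b) := by
    rw [funext hderiv]; exact hcontD
  -- integrability of deriv b on Ioi 0
  have hintD : MeasureTheory.IntegrableOn (deriv b) (Set.Ioi (0:ℝ)) := by
    have hbound : MeasureTheory.IntegrableOn
        (fun t => (1/4)*(2*ω+lam) * Real.exp (-lam*t)) (Set.Ioi (0:ℝ)) :=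
      (exp_neg_integrableOn_Ioi 0 hlam).const_mul _
    apply hbound.integrable.mono (hcont.aestronglyMeasurable.restrict)
    filter_upwards with t
    rw [hderiv t]
    have he : 0 < Real.exp (-lam*t) := Real.exp_pos _
    have hs : |Real.sin (ω*t)| ≤ 1 := Real.abs_sin_le_one _
    have hc : |Real.cos (ω*t)| ≤ 1 := Real.abs_cos_le_one _
    have h3 : |Real.sin (ω*t) * (2*ω*Real.cos (ω*t) - lam * Real.sin (ω*t))| ≤ 2*ω + lam := by
      rw [abs_mul]
      calc |Real.sin (ω*t)| * |2*ω*Real.cos (ω*t) - lam * Real.sin (ω*t)|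
          ≤ 1 * (2*ω + lam) := by
            apply mul_le_mul hs _ (abs_nonneg _) zero_le_one
            calc |2*ω*Real.cos (ω*t) - lam * Real.sin (ω*t)|
                ≤ |2*ω*Real.cos (ω*t)| + |lam * Real.sin (ω*t)| := abs_sub _ _
              _ ≤ 2*ω + lam := by
                  simp only [abs_mul, abs_of_nonneg hω.le, abs_of_nonneg hlam.le, abs_two]
                  nlinarith [abs_nonneg (Real.cos (ω*t)), abs_nonneg (Real.sin (ω*t))]
        _ = 2*ω + lam := one_mul _
    simp only [hD, Real.norm_eq_abs]
    rw [abs_mul, abs_mul]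
    have h4 : |(1:ℝ)/4| = 1/4 := by norm_num
    rw [h4, abs_of_nonneg he.le]
    have hRHS : |(1:ℝ)/4*(2*ω+lam) * Real.exp (-lam*t)| = (1/4)*(2*ω+lam) * Real.exp (-lam*t) := by
      apply abs_of_nonneg; positivity
    rw [hRHS]
    calc 1/4 * Real.exp (-lam*t) * |Real.sin (ω*t) * (2*ω*Real.cos (ω*t) - lam * Real.sin (ω*t))|
        ≤ 1/4 * Real.exp (-lam*t) * (2*ω + lam) := by
          apply mul_le_mul_of_nonneg_left h3; positivity
      _ = 1/4*(2*ω+lam) * Real.exp (-lam*t) := by ring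
  have hintmax : MeasureTheory.IntegrableOn
      (fun t => max (deriv b t) 0) (Set.Ioi (0:ℝ)) := hintD.pos_part
  -- positivity
  set δ : ℝ := min (Real.pi/(4*ω)) (1/lam) with hδdef
  have hπ : 0 < Real.pi := Real.pi_pos
  have hδpos : 0 < δ := lt_min (by positivity) (by positivity)
  have hDpos : ∀ x ∈ Set.Ioo (0:ℝ) δ, 0 < D x := by
    rintro x ⟨hx0, hxδ⟩
    have hωx0 : 0 < ω * x := by positivity
    have hωxlt : ω * x < Real.pi/4 := by
      have : x < Real.pi/(4*ω) := lt_of_lt_of_le hxδ (min_le_left _ _)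
      calc ω * x < ω * (Real.pi/(4*ω)) := by
            exact mul_lt_mul_of_pos_left this hω
        _ = Real.pi/4 := by field_simp
    have hπ4 : Real.pi/4 < 1 := by
      have := Real.pi_lt_d2
      linarith
    have hωx1 : ω * x < 1 := hωxlt.trans hπ4
    have hsinpos : 0 < Real.sin (ω*x) :=
      Real.sin_pos_of_pos_of_lt_pi hωx0 (by linarith)
    have hcos : (1:ℝ)/2 < Real.cos (ω*x) := by
      have h1 := Real.one_sub_sq_div_two_le_cos (x := ω*x)
      nlinarith
    have hsinle : lam * Real.sin (ω*x) < ω := by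
      have h1 : Real.sin (ω*x) ≤ ω*x := Real.sin_le hωx0.le
      have h2 : x < 1/lam := lt_of_lt_of_le hxδ (min_le_right _ _)
      have h3 : lam * x < 1 := by
        calc lam * x < lam * (1/lam) := mul_lt_mul_of_pos_left h2 hlam
          _ = 1 := by field_simp
      calc lam * Real.sin (ω*x) ≤ lam * (ω*x) := by
            exact mul_le_mul_of_nonneg_left h1 hlam.le
        _ = ω * (lam * x) := by ring
        _ < ω * 1 := mul_lt_mul_of_pos_left h3 hω
        _ = ω := mul_one ω
    have hfac : 0 < 2*ω*Real.cos (ω*x) - lam * Real.sin (ω*x) := by nlinarith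
    have he : 0 < Real.exp (-lam*x) := Real.exp_pos _
    simp only [hD]
    positivity
  have hIpos : 0 < ∫ x in (0:ℝ)..δ, max (deriv b x) 0 := by
    apply intervalIntegral.intervalIntegral_pos_of_pos_on
    · exact ((hcont.max continuous_const).intervalIntegrable _ _)
    · intro x hx
      rw [hderiv x]
      exact lt_max_of_lt_left (hDpos x hx)
    · exact hδpos
  have hbk : 0 < backflow b := by
    unfold backflow
    have heq : (∫ x in (0:ℝ)..δ, max (deriv b x) 0)
        = ∫ x in Set.Ioc (0:ℝ) δ, max (deriv b x) 0 :=
      intervalIntegral.integral_of_le hδpos.le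
    rw [heq] at hIpos
    refine lt_of_lt_of_le hIpos ?_
    apply MeasureTheory.setIntegral_mono_set hintmax
    · filter_upwards with t; exact le_max_right _ _
    · exact HasSubset.Subset.eventuallyLE Set.Ioc_subset_Ioi_self
  refine ⟨hdiff, hintmax, hbk, ?_⟩
  intro hanti
  have hb0 : b 0 = 0 := by simp [hb]
  set t0 : ℝ := δ/2 with ht0
  have ht0pos : 0 < t0 := by positivity
  have hbt0 : 0 < b t0 := by
    rw [hb]
    have hωx0 : 0 < ω * t0 := by positivity
    have hωxlt : ω * t0 < Real.pi := by
      have h1 : t0 < δ := by simp [ht0]; linarith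
      have h2 : δ ≤ Real.pi/(4*ω) := min_le_left _ _
      have : t0 < Real.pi/(4*ω) := lt_of_lt_of_le h1 h2
      calc ω * t0 < ω * (Real.pi/(4*ω)) := mul_lt_mul_of_pos_left this hω
        _ = Real.pi/4 := by field_simp
        _ < Real.pi := by linarith
    have hsin : 0 < Real.sin (ω*t0) := Real.sin_pos_of_pos_of_lt_pi hωx0 hωxlt
    positivity
  have := hanti (Set.self_mem_Ici) (Set.mem_Ici.2 ht0pos.le) ht0pos.le
  rw [hb0] at this
  linarith
end
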